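/- Let A be a nonzero commutative radical complex Banach algebra and let A_e be its unitization with the norm ‖a + λe‖₁ = ‖a‖ + |λ|. Then there exists an extreme point f of the set D(A_e, e) of normalized states on A_e such that f is not multiplicative, i.e., there exist x, y ∈ A_e with f(xy) ≠ f(x)f(y). (This disproves the claim that every extreme normalized state on a unital commutative complex Banach algebra is multiplicative.) -/

import Mathlib

open Unitization WithLp

/-- The element `a` of `A`, viewed as the element `a + 0·e` of the unitization
`A_e = WithLp 1 (Unitization ℂ A)` equipped with the norm `‖a + λe‖₁ = ‖a‖ + |λ|`. -/
noncomputable def inrL1 {A : Type*} [NonUnitalNormedRing A] [NormedSpace ℂ A] (a : A) :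
    WithLp 1 (Unitization ℂ A) :=
  (WithLp.equiv 1 (Unitization ℂ A)).symm (Unitization.inr a)

/-- The functional `φ∞ : a + λ·e ↦ λ` on the ℓ¹-unitization, as a continuous linear map. -/
noncomputable def phiInf (A : Type*) [NonUnitalNormedRing A] [NormedSpace ℂ A]
    [IsScalarTower ℂ A A] [SMulCommClass ℂ A A] :
    WithLp 1 (Unitization ℂ A) →L[ℂ] ℂ :=
  LinearMap.mkContinuous
    ((Unitization.fstHom ℂ A).toLinearMap ∘ₗ (WithLp.linearEquiv 1 ℂ (Unitization ℂ A)).toLinearMap)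
    1
    (fun x => by
      rw [one_mul, WithLp.unitization_norm_def]
      simpa using le_add_of_nonneg_right (norm_nonneg _))

section Aux

variable {A : Type*} [NonUnitalNormedRing A] [NormedSpace ℂ A]
    [IsScalarTower ℂ A A] [SMulCommClass ℂ A A]

lemma equiv_one_l1 : WithLp.equiv 1 (Unitization ℂ A) 1 = 1 := rfl

lemma norm_one_l1 : ‖(1 : WithLp 1 (Unitization ℂ A))‖ = 1 := by
  rw [WithLp.unitization_norm_def, show ofLp (1 : WithLp 1 (Unitization ℂ A)) = 1 from rfl]
  simp

lemma phiInf_apply (x : WithLp 1 (Unitization ℂ A)) :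
    phiInf A x = (WithLp.equiv 1 (Unitization ℂ A) x).fst := rfl

lemma phiInf_one : phiInf A 1 = 1 := rfl

lemma norm_phiInf_le : ‖phiInf A‖ ≤ 1 :=
  LinearMap.mkContinuous_norm_le _ zero_le_one _

lemma one_le_norm_of_one {f : WithLp 1 (Unitization ℂ A) →L[ℂ] ℂ} (hf : f 1 = 1) :
    1 ≤ ‖f‖ := by
  have := f.le_opNorm 1
  rw [norm_one_l1, mul_one, hf] at this
  simpa using this

/-- The projection `a + λe ↦ a` as a continuous linear map of norm at most one. -/
noncomputable def sndL1 : WithLp 1 (Unitization ℂ A) →L[ℂ] A :=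
  LinearMap.mkContinuous
    ((Unitization.sndHom ℂ ℂ A) ∘ₗ (WithLp.linearEquiv 1 ℂ (Unitization ℂ A)).toLinearMap)
    1
    (fun x => by
      rw [one_mul, WithLp.unitization_norm_def]
      simpa using le_add_of_nonneg_left (norm_nonneg _))

lemma sndL1_apply (x : WithLp 1 (Unitization ℂ A)) :
    sndL1 x = (WithLp.equiv 1 (Unitization ℂ A) x).snd := rfl

lemma l1_decomp (x : WithLp 1 (Unitization ℂ A)) :
    x = inrL1 ((WithLp.equiv 1 (Unitization ℂ A) x).snd)
      + ((WithLp.equiv 1 (Unitization ℂ A) x).fst) • 1 := by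
  apply (WithLp.equiv 1 (Unitization ℂ A)).injective
  show WithLp.equiv 1 (Unitization ℂ A) x =
      (((WithLp.equiv 1 (Unitization ℂ A) x).snd : Unitization ℂ A))
        + ((WithLp.equiv 1 (Unitization ℂ A) x).fst) • 1
  set y := WithLp.equiv 1 (Unitization ℂ A) x
  have : (y.fst : ℂ) • (1 : Unitization ℂ A) = Unitization.inl y.fst := by
    rw [← Unitization.algebraMap_eq_inl, Algebra.algebraMap_eq_smul_one]
  rw [this, add_comm]
  exact (Unitization.inl_fst_add_inr_snd_eq y).symm

lemma apply_eq_decomp (f : WithLp 1 (Unitization ℂ A) →L[ℂ] ℂ)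
    (x : WithLp 1 (Unitization ℂ A)) :
    f x = f (inrL1 ((WithLp.equiv 1 (Unitization ℂ A) x).snd))
      + ((WithLp.equiv 1 (Unitization ℂ A) x).fst) * f 1 := by
  conv_lhs => rw [l1_decomp x]
  rw [map_add, map_smul, smul_eq_mul]

lemma norm_inrL1 (a : A) : ‖inrL1 (A := A) a‖ = ‖a‖ :=
  WithLp.unitization_norm_inr a

end Aux

section Rad

variable {A : Type*} [NonUnitalNormedCommRing A] [NormedSpace ℂ A]
    [IsScalarTower ℂ A A] [SMulCommClass ℂ A A] [CompleteSpace A]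

/-- A multiplicative unital functional on the unitization of a radical algebra vanishes on `A`. -/
lemma mult_vanishes (hrad : ∀ a : A, quasispectrum ℂ a = {0})
    (f : WithLp 1 (Unitization ℂ A) →L[ℂ] ℂ) (h1 : f 1 = 1)
    (hmul : ∀ x y, f (x * y) = f x * f y) (a : A) : f (inrL1 a) = 0 := by
  let φ : WithLp 1 (Unitization ℂ A) →ₐ[ℂ] ℂ :=
    AlgHom.ofLinearMap (f : WithLp 1 (Unitization ℂ A) →ₗ[ℂ] ℂ) h1 hmul
  have hmem : φ (inrL1 a) ∈ spectrum ℂ (inrL1 a) := AlgHom.apply_mem_spectrum φ _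
  have hspec : spectrum ℂ (inrL1 a) = spectrum ℂ ((a : Unitization ℂ A)) := by
    have := AlgEquiv.spectrum_eq (WithLp.unitizationAlgEquiv (𝕜 := ℂ) (A := A) ℂ) (inrL1 a)
    rw [← this]
    rfl
  rw [hspec, ← Unitization.quasispectrum_eq_spectrum_inr' ℂ ℂ a, hrad a] at hmem
  exact hmem

end Rad

/-- If `A` is a nonzero commutative radical complex Banach algebra and `A_e` its unitization
with the norm `‖a + λe‖₁ = ‖a‖ + |λ|`, then there exists an extreme point `f` of the set
`D(A_e, e)` of normalized states on `A_e` which is not multiplicative: there are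
`x, y ∈ A_e` with `f(xy) ≠ f(x)f(y)`. -/
theorem exists_extreme_state_not_multiplicative
    {A : Type*} [NonUnitalNormedCommRing A] [NormedSpace ℂ A]
    [IsScalarTower ℂ A A] [SMulCommClass ℂ A A] [CompleteSpace A] [Nontrivial A]
    (hrad : ∀ a : A, quasispectrum ℂ a = {0}) :
    ∃ f ∈ Set.extremePoints ℝ
        {f : WithLp 1 (Unitization ℂ A) →L[ℂ] ℂ | f 1 = 1 ∧ ‖f‖ = 1},
      ∃ x y : WithLp 1 (Unitization ℂ A), f (x * y) ≠ f x * f y := by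
  classical
  letI : LocallyConvexSpace ℝ (WeakDual ℂ (WithLp 1 (Unitization ℂ A))) :=
    WeakBilin.locallyConvexSpace
  set E := WithLp 1 (Unitization ℂ A) with hE
  -- the compact convex set T in the weak-* dual
  set T : Set (WeakDual ℂ E) :=
    (WeakDual.toStrongDual ⁻¹' Metric.closedBall 0 1) ∩ {g | g (1 : E) = 1} with hT
  have hTclosed : IsClosed T :=
    (WeakDual.isClosed_closedBall 0 1).inter
      (isClosed_eq (WeakDual.eval_continuous (1 : E)) continuous_const)
  have hTcompact : IsCompact T :=
    (WeakDual.isCompact_closedBall 0 1).of_isClosed_subset hTclosed Set.inter_subset_left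
  have hTne : T.Nonempty := by
    refine ⟨phiInf A, ?_, phiInf_one⟩
    refine (mem_closedBall_zero_iff (E := StrongDual ℂ (WithLp 1 (Unitization ℂ A)))).mpr ?_
    exact norm_phiInf_le (A := A)
  obtain ⟨f, hfT, hfext⟩ := hTcompact.extremePoints_nonempty hTne
  let f' : E →L[ℂ] ℂ := WeakDual.toStrongDual f
  have hff' : ∀ x : E, f x = f' x := fun x => rfl
  have hf1 : f' 1 = 1 := hfT.2
  have hfle : ‖f'‖ ≤ 1 := by
    have := hfT.1
    have h' : f' ∈ Metric.closedBall (0 : StrongDual ℂ (WithLp 1 (Unitization ℂ A))) 1 := this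
    exact (mem_closedBall_zero_iff (E := StrongDual ℂ (WithLp 1 (Unitization ℂ A)))).mp h'
  have hfnorm : ‖f'‖ = 1 := le_antisymm hfle (one_le_norm_of_one hf1)
  refine ⟨f', ?_, ?_⟩
  · -- f is an extreme point of the set of normalized states
    rw [mem_extremePoints]
    refine ⟨⟨hf1, hfnorm⟩, fun g₁ hg₁ g₂ hg₂ hseg => ?_⟩
    refine ⟨hfext (x₁ := g₁) ⟨?_, hg₁.1⟩ (x₂ := g₂) ⟨?_, hg₂.1⟩ hseg,
      hfext (x₁ := g₂) ⟨?_, hg₂.1⟩ (x₂ := g₁) ⟨?_, hg₁.1⟩ ((openSegment_symm ℝ g₁ g₂).subst (motive := fun s => f' ∈ s) hseg)⟩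
    · refine (mem_closedBall_zero_iff (E := StrongDual ℂ (WithLp 1 (Unitization ℂ A)))).mpr ?_
      exact hg₁.2.le
    · refine (mem_closedBall_zero_iff (E := StrongDual ℂ (WithLp 1 (Unitization ℂ A)))).mpr ?_
      exact hg₂.2.le
    · refine (mem_closedBall_zero_iff (E := StrongDual ℂ (WithLp 1 (Unitization ℂ A)))).mpr ?_
      exact hg₂.2.le
    · refine (mem_closedBall_zero_iff (E := StrongDual ℂ (WithLp 1 (Unitization ℂ A)))).mpr ?_
      exact hg₁.2.le
  · -- f is not multiplicative
    by_contra hcon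
    push_neg at hcon
    have hvan : ∀ a : A, f' (inrL1 a) = 0 :=
      mult_vanishes hrad _ hf1 hcon
    -- hence f = phiInf
    have hfeq : ∀ x : E, f' x = (WithLp.equiv 1 (Unitization ℂ A) x).fst := by
      intro x
      rw [apply_eq_decomp, hvan, hf1, zero_add, mul_one]
    -- perturbation
    obtain ⟨a₀, ha₀⟩ := exists_ne (0 : A)
    obtain ⟨ψ, hψ1, hψa⟩ := exists_dual_vector ℂ a₀ (norm_ne_zero_iff.mpr ha₀)
    set ξ : E →L[ℂ] ℂ := ψ.comp sndL1 with hξ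
    have hξ_apply : ∀ x : E, ξ x = ψ ((WithLp.equiv 1 (Unitization ℂ A) x).snd) := fun x => rfl
    have hξ1 : ξ (1 : E) = 0 := by
      rw [hξ_apply, equiv_one_l1]
      simp
    have hbound : ∀ (s : ℝ) (_ : s = 1 ∨ s = -1) (x : E),
        ‖f' x + s • ξ x‖ ≤ ‖x‖ := by
      intro s hs x
      rw [hfeq, hξ_apply, WithLp.unitization_norm_def]
      calc ‖(WithLp.equiv 1 (Unitization ℂ A) x).fst
              + s • ψ ((WithLp.equiv 1 (Unitization ℂ A) x).snd)‖
          ≤ ‖(WithLp.equiv 1 (Unitization ℂ A) x).fst‖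
              + ‖s • ψ ((WithLp.equiv 1 (Unitization ℂ A) x).snd)‖ := norm_add_le _ _
        _ ≤ ‖(WithLp.equiv 1 (Unitization ℂ A) x).fst‖
              + ‖(WithLp.equiv 1 (Unitization ℂ A) x).snd‖ := by
            gcongr
            rw [norm_smul]
            have h1 : ‖s‖ = 1 := by rcases hs with h | h <;> simp [h]
            rw [h1, one_mul]
            calc ‖ψ ((WithLp.equiv 1 (Unitization ℂ A) x).snd)‖
                ≤ ‖ψ‖ * ‖(WithLp.equiv 1 (Unitization ℂ A) x).snd‖ := ψ.le_opNorm _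
              _ = ‖(WithLp.equiv 1 (Unitization ℂ A) x).snd‖ := by rw [hψ1, one_mul]
    -- the two perturbed states
    set gp : E →L[ℂ] ℂ := f' + ξ with hgp
    set gm : E →L[ℂ] ℂ := f' - ξ with hgm
    have hgpT : (gp : WeakDual ℂ E) ∈ T := by
      constructor
      · refine (mem_closedBall_zero_iff (E := StrongDual ℂ (WithLp 1 (Unitization ℂ A)))).mpr ?_
        refine ContinuousLinearMap.opNorm_le_bound _ zero_le_one fun x => ?_
        rw [one_mul]
        have := hbound 1 (Or.inl rfl) x
        simpa [hgp] using this
      · show gp (1 : E) = 1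
        simp only [hgp, ContinuousLinearMap.add_apply, hf1, hξ1, add_zero]
    have hgmT : (gm : WeakDual ℂ E) ∈ T := by
      constructor
      · refine (mem_closedBall_zero_iff (E := StrongDual ℂ (WithLp 1 (Unitization ℂ A)))).mpr ?_
        refine ContinuousLinearMap.opNorm_le_bound _ zero_le_one fun x => ?_
        rw [one_mul]
        have := hbound (-1) (Or.inr rfl) x
        simpa [hgm, sub_eq_add_neg] using this
      · show gm (1 : E) = 1
        simp only [hgm, ContinuousLinearMap.sub_apply, hf1, hξ1, sub_zero]
    have hseg : f ∈ openSegment ℝ (gp : WeakDual ℂ E) (gm : WeakDual ℂ E) := by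
      refine ⟨1/2, 1/2, by norm_num, by norm_num, by norm_num, ?_⟩
      show (1/2 : ℝ) • gp + (1/2 : ℝ) • gm = f'
      ext x
      simp only [hgp, hgm, ContinuousLinearMap.add_apply, ContinuousLinearMap.smul_apply,
        ContinuousLinearMap.sub_apply]
      rw [Complex.real_smul, Complex.real_smul]
      push_cast
      ring
    have hgpf : (gp : WeakDual ℂ E) = f := hfext hgpT hgmT hseg
    have hbad : gp (inrL1 a₀) = f' (inrL1 a₀) := by rw [hgpf]; exact hff' _
    rw [hvan a₀, hgp, ContinuousLinearMap.add_apply, hvan a₀, zero_add, hξ_apply] at hbad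
    have heq : ψ a₀ = 0 := hbad
    rw [heq] at hψa
    exact ha₀ (norm_eq_zero.mp (Complex.ofReal_eq_zero.mp hψa.symm))
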